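/- Let F = F_q be a finite field. For each n ≥ 1 and α ∈ F, let N_{A_n}(α) denote the number of solutions in F^{2n} of the system x_i·x_i' = 1 + c_i·x_{i-1}·x_{i+1} for 1 ≤ i ≤ n, where c_1 = α, c_i = 1 for i ≥ 2, and x_0 = x_{n+1} = 1 by convention. Then for every n ≥ 1, the sum over all α ∈ F_q^* of N_{A_n}(α) equals (q^{n+2} + (-1)^{n+1})/(q+1). -/

import Mathlib

/-- Extension of `x : Fin n → F` to all of `ℕ`, with value `1` outside `{1, …, n}`
(1-indexed: `extA x k = x (k-1)` for `1 ≤ k ≤ n`). -/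
def extA {F : Type*} [One F] {n : ℕ} (x : Fin n → F) (k : ℕ) : F :=
  if h : 1 ≤ k ∧ k ≤ n then x ⟨k - 1, by omega⟩ else 1

section ext
variable {F : Type*} [One F] {n : ℕ}
lemma extA_zero (x : Fin n → F) : extA x 0 = 1 := by simp [extA]
lemma extA_of_gt (x : Fin n → F) {k : ℕ} (h : n < k) : extA x k = 1 := by
  simp only [extA]; rw [dif_neg]; omega
lemma extA_one (y : Fin (n+1) → F) : extA y 1 = y 0 := by simp [extA]
lemma extA_two (y : Fin (n+2) → F) : extA y 2 = y 1 := by simp [extA]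
lemma extA_cons_one (v : F) (x : Fin n → F) : extA (Fin.cons v x : Fin (n+1) → F) 1 = v := by
  simp [extA]
lemma extA_cons_succ (v : F) (x : Fin n → F) {k : ℕ} (hk : 1 ≤ k) :
    extA (Fin.cons v x : Fin (n+1) → F) (k+1) = extA x k := by
  simp only [extA]
  by_cases h : k ≤ n
  · rw [dif_pos ⟨by omega, by omega⟩, dif_pos ⟨hk, h⟩]
    obtain ⟨j, rfl⟩ := Nat.exists_eq_add_of_le hk
    have h1 : (⟨1 + j + 1 - 1, by omega⟩ : Fin (n+1)) = Fin.succ ⟨1 + j - 1, by omega⟩ := by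
      ext; simp; omega
    rw [h1, Fin.cons_succ]
  · rw [dif_neg (by omega), dif_neg (by omega)]
lemma extA_cons_two (v : F) (x : Fin n → F) :
    extA (Fin.cons v x : Fin (n+1) → F) 2 = extA x 1 := by
  rw [show (2:ℕ) = 1 + 1 from rfl]
  exact extA_cons_succ v x le_rfl
lemma extA_tail (y : Fin (n+1) → F) {k : ℕ} (hk : 1 ≤ k) :
    extA (Fin.tail y) k = extA y (k+1) := by
  conv_rhs => rw [← Fin.cons_self_tail y]
  rw [extA_cons_succ _ _ hk]
lemma extA_tail_tail (z : Fin (n+2) → F) {j : ℕ} (hj : 1 ≤ j) :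
    extA (Fin.tail (Fin.tail z)) j = extA z (j+2) := by
  rw [extA_tail _ hj, extA_tail _ (by omega : 1 ≤ j+1)]
lemma extA_cons_cons (a b : F) (x : Fin n → F) {i : ℕ} (hi : 1 ≤ i) :
    extA (Fin.cons a (Fin.cons b x) : Fin (n+2) → F) (i+2) = extA x i := by
  rw [show i + 2 = (i+1) + 1 from rfl, extA_cons_succ _ _ (by omega), extA_cons_succ _ _ hi]
omit [One F] in
lemma cons_cons_tail_tail (z : Fin (n+2) → F) :
    Fin.cons (z 0) (Fin.cons (z 1) (Fin.tail (Fin.tail z))) = z := by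
  have h : z 1 = Fin.tail z 0 := by simp [Fin.tail]
  rw [h, Fin.cons_self_tail, Fin.cons_self_tail]
end ext


/-- Number of points over `F` of the type `Aₙ` variety `X_{Aₙ}(α, 1, …, 1)`:
solutions of `xₖ xₖ' = 1 + cₖ x_{k-1} x_{k+1}` with `c₁ = α`, `cₖ = 1` otherwise,
and the convention `x₀ = x_{n+1} = 1`. -/
noncomputable def NA (F : Type*) [Field F] (n : ℕ) (α : F) : ℕ :=
  Nat.card {p : (Fin n → F) × (Fin n → F) //
    ∀ k, 1 ≤ k → k ≤ n →
      extA p.1 k * extA p.2 k =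
        1 + (if k = 1 then α else 1) * extA p.1 (k - 1) * extA p.1 (k + 1)}

def condA {F : Type*} [Field F] {n : ℕ} (α : F) (p : (Fin n → F) × (Fin n → F)) : Prop :=
  ∀ k, 1 ≤ k → k ≤ n →
      extA p.1 k * extA p.2 k =
        1 + (if k = 1 then α else 1) * extA p.1 (k - 1) * extA p.1 (k + 1)

lemma NA_eq (F : Type*) [Field F] (n : ℕ) (α : F) :
    NA F n α = Nat.card {p : (Fin n → F) × (Fin n → F) // condA α p} := rfl

lemma nat_card_sigma {ι : Type*} [Fintype ι] (f : ι → Type*) [∀ i, Finite (f i)] :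
    Nat.card (Σ i, f i) = ∑ i, Nat.card (f i) := by
  have inst := fun i => Fintype.ofFinite (f i)
  simp only [Nat.card_eq_fintype_card, Fintype.card_sigma]

lemma NA_fiber (F : Type*) [Field F] [Fintype F] (n : ℕ) (α : F) :
    NA F (n+1) α = ∑ v : F,
      Nat.card {p : (Fin (n+1) → F) × (Fin (n+1) → F) // condA α p ∧ p.1 0 = v} := by
  rw [NA_eq, ← Nat.card_congr (Equiv.sigmaFiberEquiv
    (fun p : {p : (Fin (n+1) → F) × (Fin (n+1) → F) // condA α p} => p.1.1 0)),
    nat_card_sigma]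
  refine Finset.sum_congr rfl fun v _ => Nat.card_congr ?_
  exact Equiv.subtypeSubtypeEquivSubtypeInter (condA α) (fun p => p.1 0 = v)

lemma fiber_ne {F : Type*} [Field F] {n : ℕ} (β v : F) (hv : v ≠ 0) :
    Nat.card {p : (Fin (n+1) → F) × (Fin (n+1) → F) // condA β p ∧ p.1 0 = v}
      = NA F n v := by
  rw [NA_eq]
  refine Nat.card_congr ⟨fun p => ⟨(Fin.tail p.1.1, Fin.tail p.1.2), fun k hk1 hk2 => ?_⟩,
    fun x => ⟨(Fin.cons v x.1.1, Fin.cons ((1 + β * extA x.1.1 1) * v⁻¹) x.1.2),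
      fun k hk1 hk2 => ?_, by simp⟩,
    fun p => ?_, fun x => ?_⟩
  · -- forward condition
    obtain ⟨⟨y, y'⟩, hC, h0⟩ := p
    dsimp only at *
    have h := hC (k+1) (by omega) (by omega)
    rw [extA_tail _ hk1, extA_tail _ hk1, extA_tail _ (by omega : (1:ℕ) ≤ k+1), h,
      if_neg (by omega : ¬ k + 1 = 1)]
    simp only [Nat.add_sub_cancel]
    by_cases hk : k = 1
    · subst hk
      rw [if_pos rfl, extA_zero]
      have hy1 : extA y 1 = v := by rw [extA_one]; exact h0
      rw [hy1]; try ring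
    · rw [if_neg hk]
      have ht : extA (Fin.tail y) (k-1) = extA y k := by
        have h2 := extA_tail y (k := k-1) (by omega)
        rwa [Nat.sub_add_cancel hk1] at h2
      rw [ht]; try ring
  · -- backward condition
    obtain ⟨⟨x1, x2⟩, hC⟩ := x
    dsimp only at *
    by_cases hk : k = 1
    · subst hk
      rw [extA_cons_one, extA_cons_one, if_pos rfl, extA_zero,
        extA_cons_succ _ _ (le_refl 1)]
      field_simp
    · obtain ⟨j, rfl⟩ : ∃ j, k = j + 1 := ⟨k - 1, by omega⟩
      have hj1 : 1 ≤ j := by omega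
      have h := hC j hj1 (by omega)
      rw [extA_cons_succ _ _ hj1, extA_cons_succ _ _ hj1,
        extA_cons_succ _ _ (by omega : (1:ℕ) ≤ j + 1), h, if_neg hk]
      simp only [Nat.add_sub_cancel]
      by_cases hj : j = 1
      · subst hj
        rw [if_pos rfl, extA_zero, extA_cons_one]; ring
      · rw [if_neg hj]
        have hc : extA (Fin.cons v x1 : Fin (n+1) → F) j = extA x1 (j-1) := by
          have h2 := extA_cons_succ v x1 (k := j-1) (by omega)
          rwa [Nat.sub_add_cancel hj1] at h2
        rw [hc]; try ring
  · -- left inverse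
    obtain ⟨⟨y, y'⟩, hC, h0⟩ := p
    dsimp only at *
    have h1 := hC 1 le_rfl (by omega)
    rw [extA_one, extA_one, extA_zero, if_pos rfl] at h1
    apply Subtype.ext
    dsimp only
    have hw : (1 + β * extA (Fin.tail y) 1) * v⁻¹ = y' 0 := by
      rw [extA_tail _ le_rfl]
      have h2 : (1 : F) + β * extA y (1+1) = v * y' 0 := by
        linear_combination -h1 + y' 0 * h0
      rw [h2]
      field_simp
    rw [hw, ← h0, Fin.cons_self_tail, Fin.cons_self_tail]
  · -- right inverse
    apply Subtype.ext
    simp [Fin.tail_cons]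

lemma fiber_zero {F : Type*} [Field F] {n : ℕ} (β : F) (hβ : β ≠ 0) :
    Nat.card {p : (Fin (n+2) → F) × (Fin (n+2) → F) // condA β p ∧ p.1 0 = 0}
      = Nat.card F * Nat.card {p : (Fin n → F) × (Fin n → F) // condA (-β⁻¹) p} := by
  rw [← Nat.card_prod]
  refine Nat.card_congr ⟨fun p => (p.1.2 0, ⟨(Fin.tail (Fin.tail p.1.1), Fin.tail (Fin.tail p.1.2)),
      fun k hk1 hk2 => ?_⟩),
    fun q => ⟨(Fin.cons 0 (Fin.cons (-β⁻¹) q.2.1.1), Fin.cons q.1 (Fin.cons (-β) q.2.1.2)),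
      fun k hk1 hk2 => ?_, by simp⟩,
    fun p => ?_, fun q => ?_⟩
  · -- forward condition
    obtain ⟨hC, h0⟩ := p.2
    have h := hC (k+2) (by omega) (by omega)
    rw [extA_tail_tail _ hk1, extA_tail_tail _ hk1,
      extA_tail_tail _ (by omega : (1:ℕ) ≤ k+1), h,
      if_neg (by omega : ¬ k + 2 = 1)]
    have e1 : k + 2 - 1 = k + 1 := by omega
    have e2 : k + 2 + 1 = (k + 1) + 2 := by omega
    rw [e1, e2]
    by_cases hk : k = 1
    · subst hk
      rw [if_pos rfl, extA_zero]
      have h1 := hC 1 (by omega) (by omega)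
      rw [extA_one, extA_one, extA_zero, if_pos rfl, h0] at h1
      have h2 : β * extA p.1.1 (1+1) = -1 := by linear_combination -h1
      have hy2 : extA p.1.1 (1+1) = -β⁻¹ :=
        mul_left_cancel₀ hβ (by rw [h2]; field_simp)
      rw [hy2]; try ring
    · rw [if_neg hk]
      have ht : extA (Fin.tail (Fin.tail p.1.1)) (k-1) = extA p.1.1 (k+1) := by
        rw [extA_tail_tail _ (by omega : 1 ≤ k - 1)]; congr 1; omega
      rw [ht]; try ring
  · -- backward condition
    have hC := q.2.2
    set x1 := q.2.1.1 with hx1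
    set x2 := q.2.1.2 with hx2
    have hY2 : extA (Fin.cons 0 (Fin.cons (-β⁻¹) x1) : Fin (n+2) → F) (1+1) = -β⁻¹ := by
      rw [extA_cons_succ _ _ (le_refl 1), extA_cons_one]
    by_cases hk : k = 1
    · subst hk
      rw [extA_cons_one, extA_cons_one, if_pos rfl, extA_zero, hY2]
      field_simp
      ring
    · by_cases hk2 : k = 2
      · subst hk2
        dsimp only
        rw [if_neg (by norm_num : ¬ (2:ℕ) = 1), (by norm_num : (2:ℕ) - 1 = 1),
          extA_cons_one, extA_cons_succ _ _ (by norm_num : (1:ℕ) ≤ 2),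
          extA_two, extA_two, ← Fin.succ_zero_eq_one', Fin.cons_succ, Fin.cons_succ,
          Fin.cons_zero, Fin.cons_zero, extA_cons_two]
        field_simp
        ring
      · obtain ⟨j, rfl⟩ : ∃ j, k = j + 2 := ⟨k - 2, by omega⟩
        have hj1 : 1 ≤ j := by omega
        have h := hC j hj1 (by omega)
        rw [extA_cons_cons _ _ _ hj1, extA_cons_cons _ _ _ hj1,
          extA_cons_cons _ _ _ (by omega : (1:ℕ) ≤ j+1), h,
          if_neg (by omega : ¬ j + 2 = 1)]
        have e1 : j + 2 - 1 = j + 1 := by omega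
        rw [e1]
        by_cases hj : j = 1
        · subst hj
          rw [if_pos rfl, extA_zero, hY2]; try ring
        · rw [if_neg hj]
          have hc : extA (Fin.cons 0 (Fin.cons (-β⁻¹) x1) : Fin (n+2) → F) (j+1)
              = extA x1 (j-1) := by
            rw [show j + 1 = (j-1) + 2 by omega, extA_cons_cons _ _ _ (by omega : 1 ≤ j - 1)]
          rw [hc]; try ring
  · -- left inverse
    obtain ⟨hC, h0⟩ := p.2
    have h1 := hC 1 (by omega) (by omega)
    rw [extA_one, extA_one, extA_zero, if_pos rfl, h0] at h1
    have hb : β * extA p.1.1 (1+1) = -1 := by linear_combination -h1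
    have hy1 : p.1.1 1 = -β⁻¹ := by
      rw [← extA_two p.1.1]
      exact mul_left_cancel₀ hβ (by rw [hb]; field_simp)
    have h2 := hC 2 (by omega) (by omega)
    rw [extA_two, extA_two, if_neg (by norm_num : ¬ (2:ℕ) = 1),
      (by norm_num : (2:ℕ) - 1 = 1), extA_one, h0, hy1] at h2
    have hy'1 : p.1.2 1 = -β := by
      have hβi : β⁻¹ ≠ 0 := inv_ne_zero hβ
      field_simp at h2
      linear_combination -h2
    apply Subtype.ext
    apply Prod.ext
    · show Fin.cons 0 (Fin.cons (-β⁻¹) (Fin.tail (Fin.tail p.1.1))) = p.1.1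
      conv_rhs => rw [← cons_cons_tail_tail (p.1.1 : Fin (n+2) → F)]
      rw [h0, hy1]
    · show Fin.cons (p.1.2 0) (Fin.cons (-β) (Fin.tail (Fin.tail p.1.2))) = p.1.2
      conv_rhs => rw [← cons_cons_tail_tail (p.1.2 : Fin (n+2) → F)]
      rw [hy'1]
  · -- right inverse
    apply Prod.ext
    · simp
    · apply Subtype.ext
      apply Prod.ext <;> simp [Fin.tail_cons]


section count
variable {F : Type*} [Field F] [Fintype F] [DecidableEq F]

lemma NA_zero (α : F) : NA F 0 α = 1 := by
  rw [NA_eq]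
  have e : {p : (Fin 0 → F) × (Fin 0 → F) // condA α p} ≃ ((Fin 0 → F) × (Fin 0 → F)) :=
    Equiv.subtypeUnivEquiv (fun p k hk1 hk2 => absurd hk2 (by omega))
  rw [Nat.card_congr e, Nat.card_eq_fintype_card]
  simp

lemma NA_rec (n : ℕ) (β : F) (hβ : β ≠ 0) :
    NA F (n+2) β = (∑ v ∈ ({0}ᶜ : Finset F), NA F (n+1) v)
      + Fintype.card F * NA F n (-β⁻¹) := by
  rw [NA_fiber, ← Finset.sum_compl_add_sum ({0} : Finset F), Finset.sum_singleton]
  congr 1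
  · refine Finset.sum_congr rfl fun v hv => ?_
    have hv0 : v ≠ 0 := by simpa using hv
    rw [fiber_ne β v hv0]
  · rw [fiber_zero β hβ, ← NA_eq, Nat.card_eq_fintype_card]

lemma sum_rec (n : ℕ) :
    ∑ β ∈ ({0}ᶜ : Finset F), NA F (n+2) β
      = (Fintype.card F - 1) * (∑ v ∈ ({0}ᶜ : Finset F), NA F (n+1) v)
        + Fintype.card F * ∑ β ∈ ({0}ᶜ : Finset F), NA F n β := by
  rw [Finset.sum_congr rfl (fun β hβ => NA_rec n β (by simpa using hβ)),
    Finset.sum_add_distrib, Finset.sum_const]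
  congr 1
  · rw [Finset.card_compl, Finset.card_singleton, smul_eq_mul]
  · rw [← Finset.mul_sum]
    congr 1
    refine Finset.sum_nbij' (fun β => -β⁻¹) (fun β => -β⁻¹) ?_ ?_ ?_ ?_ ?_ <;>
      intro β hβ <;> simp_all [inv_ne_zero, neg_ne_zero, inv_neg, inv_inv]

lemma NA_one_card (α : F) :
    NA F 1 α = Nat.card {z : F × F // z.1 * z.2 = 1 + α} := by
  rw [NA_eq]
  refine Nat.card_congr ⟨fun p => ⟨(p.1.1 0, p.1.2 0), ?_⟩,
    fun z => ⟨(fun _ => z.1.1, fun _ => z.1.2), fun k hk1 hk2 => ?_⟩, fun p => ?_, fun z => ?_⟩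
  · have h := p.2 1 le_rfl le_rfl
    rw [extA_one, extA_one, extA_zero, if_pos rfl, extA_of_gt _ (by omega)] at h
    dsimp only
    rw [h]; ring
  · have hk : k = 1 := by omega
    subst hk
    have hz := z.2
    dsimp only
    rw [extA_one, extA_one, extA_zero, if_pos rfl, extA_of_gt _ (by omega)]
    try dsimp only
    rw [hz]; ring
  · apply Subtype.ext
    apply Prod.ext <;> (funext i; fin_cases i; rfl)
  · apply Subtype.ext
    rfl

lemma card_mul_eq (c : F) (hc : c ≠ 0) :
    Nat.card {z : F × F // z.1 * z.2 = c} = Fintype.card F - 1 := by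
  have e : {z : F × F // z.1 * z.2 = c} ≃ {a : F // ¬ (a = 0)} :=
    ⟨fun z => ⟨z.1.1, fun h => hc (by rw [← z.2, h, zero_mul])⟩,
     fun a => ⟨(a.1, a.1⁻¹ * c), mul_inv_cancel_left₀ a.2 c⟩,
     fun z => by
       apply Subtype.ext
       apply Prod.ext
       · rfl
       · have h1 : z.1.1 ≠ 0 := fun h => hc (by rw [← z.2, h, zero_mul])
         have hz := z.2
         dsimp only
         exact mul_left_cancel₀ h1 (by rw [mul_inv_cancel_left₀ h1, hz]),
     fun a => by apply Subtype.ext; rfl⟩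
  rw [Nat.card_congr e, Nat.card_eq_fintype_card, Fintype.card_subtype_compl,
    Fintype.card_subtype_eq]

lemma card_mul_zero :
    Nat.card {z : F × F // z.1 * z.2 = (0:F)} = 2 * Fintype.card F - 1 := by
  have e : F ⊕ {a : F // ¬ (a = 0)} ≃ {z : F × F // z.1 * z.2 = (0:F)} :=
    ⟨fun s => s.elim (fun b => ⟨(0, b), by simp⟩) (fun a => ⟨(a.1, 0), by simp⟩),
     fun z => if h : z.1.1 = 0 then Sum.inl z.1.2 else Sum.inr ⟨z.1.1, h⟩,
     fun s => by
       rcases s with b | a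
       · simp
       · simp [a.2],
     fun z => by
       by_cases h : z.1.1 = 0
       · simp only [h, dif_pos]
         apply Subtype.ext
         have := z.2
         apply Prod.ext <;> simp [h]
       · simp only [h, dif_neg, not_false_iff]
         apply Subtype.ext
         have hz := z.2
         have h2 : z.1.2 = 0 := by
           rcases mul_eq_zero.mp hz with h1 | h1
           · exact absurd h1 h
           · exact h1
         apply Prod.ext <;> simp [h2]⟩
  rw [← Nat.card_congr e, Nat.card_sum, Nat.card_eq_fintype_card, Nat.card_eq_fintype_card,
    Fintype.card_subtype_compl, Fintype.card_subtype_eq]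
  have := Fintype.card_pos (α := F)
  omega

lemma sum_one :
    (∑ α ∈ ({0}ᶜ : Finset F), (NA F 1 α : ℤ))
      = (Fintype.card F : ℤ)^2 - Fintype.card F + 1 := by
  classical
  have hq2 : 2 ≤ Fintype.card F := Fintype.one_lt_card
  have hmem : (-1 : F) ∈ ({0}ᶜ : Finset F) := by simp
  rw [← Finset.add_sum_erase _ _ hmem]
  have h1 : (NA F 1 (-1 : F) : ℤ) = 2 * Fintype.card F - 1 := by
    rw [NA_one_card, show (1 : F) + (-1) = 0 by ring, card_mul_zero]
    push_cast [Nat.cast_sub (by omega : 1 ≤ 2 * Fintype.card F)]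
    ring
  have h2 : ∀ α ∈ (({0}ᶜ : Finset F).erase (-1)), (NA F 1 α : ℤ) = Fintype.card F - 1 := by
    intro α hα
    have hα1 : α ≠ -1 := Finset.ne_of_mem_erase hα
    have hne : (1 : F) + α ≠ 0 := fun h => hα1 (by linear_combination h)
    rw [NA_one_card, card_mul_eq _ hne]
    push_cast [Nat.cast_sub (by omega : 1 ≤ Fintype.card F)]
    ring
  rw [Finset.sum_congr rfl h2, Finset.sum_const,
    Finset.card_erase_of_mem hmem, Finset.card_compl, Finset.card_singleton, h1,
    nsmul_eq_mul]
  have e : ((Fintype.card F - 1 - 1 : ℕ) : ℤ) = (Fintype.card F : ℤ) - 2 := by omega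
  rw [e]; ring

lemma main_ind : ∀ n : ℕ,
    (∑ α ∈ ({0}ᶜ : Finset F), (NA F n α : ℤ)) * (Fintype.card F + 1) =
      (Fintype.card F : ℤ) ^ (n + 2) + (-1) ^ (n + 1) := by
  have hq2 : 2 ≤ Fintype.card F := Fintype.one_lt_card
  intro n
  induction n using Nat.strong_induction_on with
  | _ n ih =>
    match n with
    | 0 =>
      have h0 : ∀ α ∈ ({0}ᶜ : Finset F), (NA F 0 α : ℤ) = 1 := fun α _ => by
        rw [NA_zero]; norm_num
      rw [Finset.sum_congr rfl h0, Finset.sum_const, Finset.card_compl,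
        Finset.card_singleton, nsmul_eq_mul, mul_one]
      have e : ((Fintype.card F - 1 : ℕ) : ℤ) = (Fintype.card F : ℤ) - 1 := by omega
      rw [e]; ring
    | 1 =>
      rw [sum_one]; ring
    | (m+2) =>
      have h1 := ih (m+1) (by omega)
      have h0 := ih m (by omega)
      have hrec := sum_rec (F := F) m
      have hcast : (∑ α ∈ ({0}ᶜ : Finset F), (NA F (m+2) α : ℤ))
          = ((Fintype.card F : ℤ) - 1) * (∑ v ∈ ({0}ᶜ : Finset F), (NA F (m+1) v : ℤ))
            + (Fintype.card F : ℤ) * ∑ β ∈ ({0}ᶜ : Finset F), (NA F m β : ℤ) := by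
        have := congrArg (fun x : ℕ => (x : ℤ)) hrec
        push_cast [Nat.cast_sub (by omega : 1 ≤ Fintype.card F)] at this
        convert this using 2 <;> push_cast <;> ring
      rw [hcast]
      have expand : (((Fintype.card F : ℤ) - 1) * (∑ v ∈ ({0}ᶜ : Finset F), (NA F (m+1) v : ℤ))
            + (Fintype.card F : ℤ) * ∑ β ∈ ({0}ᶜ : Finset F), (NA F m β : ℤ))
            * (Fintype.card F + 1)
          = ((Fintype.card F : ℤ) - 1)
              * ((∑ v ∈ ({0}ᶜ : Finset F), (NA F (m+1) v : ℤ)) * (Fintype.card F + 1))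
            + (Fintype.card F : ℤ)
              * ((∑ β ∈ ({0}ᶜ : Finset F), (NA F m β : ℤ)) * (Fintype.card F + 1)) := by ring
      rw [expand, h1, h0]
      ring

end count

theorem stmt_6 (F : Type*) [Field F] [Fintype F] [DecidableEq F] (n : ℕ) (hn : 1 ≤ n) :
    (∑ α ∈ ({0}ᶜ : Finset F), (NA F n α : ℤ)) * (Fintype.card F + 1) =
      (Fintype.card F : ℤ) ^ (n + 2) + (-1) ^ (n + 1) := by
  exact main_ind n
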